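/- arXiv:1410.1113 — 9 statements merged into one kernel-verified Lean document; each statement's English description precedes it below -/
import Mathlib

section
/- Let λ : (0,T] → ℝ be positive, non-increasing, and differentiable, and suppose x ↦ x·|λ'(x)|/λ(x) is non-decreasing (MPE property). Fix x̃ ∈ (0,T] with λ(x̃) ≥ x̃·|λ'(x̃)|. Then for all x with 0 < x < x̃: λ(x̃) − λ(x) ≤ x̃·|λ'(x̃)| − x·|λ'(x)|. -/
/-- MPE comparison, small-`x` direction: for a positive, non-increasing, differentiable
inverse demand `lam` on `(0,T]` with monotone price elasticity, and `x̃` with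
`lam x̃ ≥ x̃·|lam' x̃|`, for all `0 < x < x̃` we have
`lam x̃ − lam x ≤ x̃·|lam' x̃| − x·|lam' x|`. -/
theorem mpe_comparison_below
    (T : ℝ) (hT : 0 < T) (lam : ℝ → ℝ)
    (hpos : ∀ x ∈ Set.Ioc 0 T, 0 < lam x)
    (hanti : AntitoneOn lam (Set.Ioc 0 T))
    (hdiff : ∀ x ∈ Set.Ioc 0 T, DifferentiableAt ℝ lam x)
    (hMPE : MonotoneOn (fun x => x * |deriv lam x| / lam x) (Set.Ioc 0 T))
    (xt : ℝ) (hxt : xt ∈ Set.Ioc 0 T)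
    (hcond : xt * |deriv lam xt| ≤ lam xt) :
    ∀ x, 0 < x → x < xt →
      lam xt - lam x ≤ xt * |deriv lam xt| - x * |deriv lam x| := by
  intro x hx hxlt
  have hxm : x ∈ Set.Ioc 0 T := ⟨hx, hxlt.le.trans hxt.2⟩
  have ha : 0 < lam xt := hpos xt hxt
  have hb : 0 < lam x := hpos x hxm
  have hba : lam xt ≤ lam x := hanti hxm hxt hxlt.le
  have hmpe := hMPE hxm hxt hxlt.le
  simp only at hmpe
  have hmpe' : x * |deriv lam x| * lam xt ≤ xt * |deriv lam xt| * lam x := by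
    rw [div_le_div_iff₀ hb ha] at hmpe
    linarith
  have hd : 0 ≤ x * |deriv lam x| := mul_nonneg hx.le (abs_nonneg _)
  have hc : 0 ≤ xt * |deriv lam xt| := mul_nonneg hxt.1.le (abs_nonneg _)
  nlinarith [mul_le_mul_of_nonneg_left hba hc,
    mul_nonneg (sub_nonneg.2 hba) (sub_nonneg.2 hcond)]
end

section
/- Let λ : (0,T] → ℝ be positive, non-increasing, and differentiable with x ↦ x·|λ'(x)|/λ(x) non-decreasing (MPE). Fix x̃ ∈ (0,T] with λ(x̃) ≥ x̃·|λ'(x̃)|. Then for all x with x̃ < x ≤ T: λ(x̃) − λ(x) ≥ x̃·|λ'(x̃)| − x·|λ'(x)|. -/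
/-- MPE comparison, large-`x` direction: for a positive, non-increasing, differentiable
inverse demand `lam` on `(0,T]` with monotone price elasticity, and `x̃` with
`lam x̃ ≥ x̃·|lam' x̃|`, for all `x̃ < x ≤ T` we have
`lam x̃ − lam x ≥ x̃·|lam' x̃| − x·|lam' x|`. -/
theorem mpe_comparison_above
    (T : ℝ) (hT : 0 < T) (lam : ℝ → ℝ)
    (hpos : ∀ x ∈ Set.Ioc 0 T, 0 < lam x)
    (hanti : AntitoneOn lam (Set.Ioc 0 T))
    (hdiff : ∀ x ∈ Set.Ioc 0 T, DifferentiableAt ℝ lam x)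
    (hMPE : MonotoneOn (fun x => x * |deriv lam x| / lam x) (Set.Ioc 0 T))
    (xt : ℝ) (hxt : xt ∈ Set.Ioc 0 T)
    (hcond : xt * |deriv lam xt| ≤ lam xt) :
    ∀ x, xt < x → x ≤ T →
      xt * |deriv lam xt| - x * |deriv lam x| ≤ lam xt - lam x := by
  intro x hlt hle
  have hx : x ∈ Set.Ioc 0 T := ⟨lt_trans hxt.1 hlt, hle⟩
  have h1 : 0 < lam xt := hpos xt hxt
  have h2 : 0 < lam x := hpos x hx
  have h3 : lam x ≤ lam xt := hanti hxt hx (le_of_lt hlt)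
  have h4 : xt * |deriv lam xt| / lam xt ≤ x * |deriv lam x| / lam x :=
    hMPE hxt hx (le_of_lt hlt)
  have h5 : xt * |deriv lam xt| * lam x ≤ x * |deriv lam x| * lam xt := by
    rw [div_le_div_iff₀ h1 h2] at h4; linarith
  have h6 : 0 ≤ xt * |deriv lam xt| :=
    mul_nonneg (le_of_lt hxt.1) (abs_nonneg _)
  nlinarith [mul_le_mul_of_nonneg_right h3 h6, sq_nonneg (lam xt - lam x)]
end

section
/- Let λ : [0,T] → ℝ be positive, non-increasing, differentiable, with hazard rate h(x) = |λ'(x)|/λ(x) non-decreasing (MHR). Let r : [0,T] → ℝ be non-negative, non-decreasing, and continuous, and let x* ≤ T satisfy λ(x) ≥ r(x) for all x ≤ x*. Then the function x ↦ |λ'(x)|/(λ(x) − r(x)) is non-decreasing on [0,x*) wherever λ(x) > r(x). -/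
/-- If the inverse demand `lam` has a monotone hazard rate on `[0,T]` and `r` is a
non-negative, non-decreasing, continuous marginal cost with `lam x ≥ r x` for `x ≤ x*`,
then `x ↦ |lam' x| / (lam x − r x)` is non-decreasing on `[0,x*)` wherever `lam x > r x`. -/
theorem mhr_hazard_with_cost_monotone
    (T : ℝ) (hT : 0 < T) (lam r : ℝ → ℝ)
    (hpos : ∀ x ∈ Set.Icc 0 T, 0 < lam x)
    (hanti : AntitoneOn lam (Set.Icc 0 T))
    (hdiff : ∀ x ∈ Set.Icc 0 T, DifferentiableAt ℝ lam x)
    (hMHR : MonotoneOn (fun x => |deriv lam x| / lam x) (Set.Icc 0 T))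
    (hr0 : ∀ x ∈ Set.Icc 0 T, 0 ≤ r x)
    (hrmono : MonotoneOn r (Set.Icc 0 T))
    (hrcont : ContinuousOn r (Set.Icc 0 T))
    (xs : ℝ) (hxs : xs ≤ T) (hxs0 : 0 ≤ xs)
    (hopt : ∀ x, 0 ≤ x → x ≤ xs → r x ≤ lam x) :
    MonotoneOn (fun x => |deriv lam x| / (lam x - r x))
      {x | x ∈ Set.Ico 0 xs ∧ r x < lam x} := by
  intro x hx y hy hxy
  obtain ⟨⟨hx0, hxlt⟩, hxr⟩ := hx
  obtain ⟨⟨hy0, hylt⟩, hyr⟩ := hy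
  have hxT : x ∈ Set.Icc (0:ℝ) T := ⟨hx0, hxlt.le.trans hxs⟩
  have hyT : y ∈ Set.Icc (0:ℝ) T := ⟨hy0, hylt.le.trans hxs⟩
  have hlx : 0 < lam x := hpos x hxT
  have hly : 0 < lam y := hpos y hyT
  have hDx : 0 < lam x - r x := sub_pos.mpr hxr
  have hDy : 0 < lam y - r y := sub_pos.mpr hyr
  have hrx : 0 ≤ r x := hr0 x hxT
  have hrxy : r x ≤ r y := hrmono hxT hyT hxy
  have hlyx : lam y ≤ lam x := hanti hxT hyT hxy
  have hA : |deriv lam x| / lam x ≤ |deriv lam y| / lam y := hMHR hxT hyT hxy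
  have hB : lam x / (lam x - r x) ≤ lam y / (lam y - r y) := by
    rw [div_le_div_iff₀ hDx hDy]
    nlinarith
  have hfx : |deriv lam x| / (lam x - r x)
      = (|deriv lam x| / lam x) * (lam x / (lam x - r x)) := by
    field_simp
  have hfy : |deriv lam y| / (lam y - r y)
      = (|deriv lam y| / lam y) * (lam y / (lam y - r y)) := by
    field_simp
  simp only [hfx, hfy]
  have h1 : (0:ℝ) ≤ lam x / (lam x - r x) := le_of_lt (div_pos hlx hDx)
  have h2 : (0:ℝ) ≤ |deriv lam y| / lam y := div_nonneg (abs_nonneg _) hly.le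
  calc |deriv lam x| / lam x * (lam x / (lam x - r x))
      ≤ |deriv lam y| / lam y * (lam x / (lam x - r x)) := by
        exact mul_le_mul_of_nonneg_right hA h1
    _ ≤ |deriv lam y| / lam y * (lam y / (lam y - r y)) := by
        exact mul_le_mul_of_nonneg_left hB h2
end

section
/- Let λ : [0,∞) → ℝ be positive, non-increasing, differentiable with |λ'(x)|/λ(x) non-decreasing (MHR), and let r be non-negative non-decreasing with λ(x) ≥ r(x) on [0,x*]. Suppose x̃ ∈ (0,x*] satisfies λ(x̃) − r(x̃) = M·x̃·|λ'(x̃)| for some integer M ≥ 1. Then ∫₀^{x*}(λ(x) − r(x)) dx ≤ (1 + M) · ∫₀^{x̃}(λ(x) − r(x)) dx. -/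
lemma aux_key_mhr (s v : ℝ) (hs : 0 ≤ s) (hv0 : 0 ≤ v) :
    1 - Real.exp (-s) - v * s ≤ (1 - v) ^ 2 := by
  rcases eq_or_lt_of_le hv0 with h0 | h0
  · have := Real.exp_pos (-s)
    nlinarith
  · set w := Real.exp (-s) with hw
    have hwpos : 0 < w := Real.exp_pos _
    have h1 : Real.log (w / v) ≤ w / v - 1 :=
      Real.log_le_sub_one_of_pos (by positivity)
    rw [Real.log_div hwpos.ne' h0.ne', Real.log_exp] at h1
    have h4 : v * (-s - Real.log v) ≤ v * (w / v - 1) :=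
      mul_le_mul_of_nonneg_left h1 h0.le
    have h5 : v * (w / v - 1) = w - v := by field_simp
    have h2 : v * Real.log v ≤ v * (v - 1) :=
      mul_le_mul_of_nonneg_left (Real.log_le_sub_one_of_pos h0) h0.le
    nlinarith


/-- Efficiency bound `1 + M` for MHR inverse demand: if the equilibrium magnitude `x̃`
satisfies `lam x̃ − r x̃ = M·x̃·|lam' x̃|`, the welfare at the optimum `x*` is at most
`(1+M)` times the welfare at `x̃`. -/
theorem efficiency_bound_mhr
    (lam r : ℝ → ℝ)
    (hpos : ∀ x, 0 ≤ x → 0 < lam x)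
    (hanti : AntitoneOn lam (Set.Ici 0))
    (hdiff : ∀ x, 0 ≤ x → DifferentiableAt ℝ lam x)
    (hMHR : MonotoneOn (fun x => |deriv lam x| / lam x) (Set.Ici 0))
    (hr0 : ∀ x, 0 ≤ x → 0 ≤ r x)
    (hrmono : MonotoneOn r (Set.Ici 0))
    (xs : ℝ) (hxs0 : 0 ≤ xs)
    (hopt : ∀ x, 0 ≤ x → x ≤ xs → r x ≤ lam x)
    (M : ℕ) (hM : 1 ≤ M)
    (xt : ℝ) (hxt : xt ∈ Set.Ioc 0 xs)
    (heq : lam xt - r xt = M * xt * |deriv lam xt|) :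
    ∫ x in (0:ℝ)..xs, (lam x - r x) ≤
      (1 + (M : ℝ)) * ∫ x in (0:ℝ)..xt, (lam x - r x) := by
  obtain ⟨hxt0, hxtxs⟩ := hxt
  set A := lam xt with hAdef
  set B := r xt with hBdef
  have hA : 0 < A := hpos xt hxt0.le
  have hB0 : 0 ≤ B := hr0 xt hxt0.le
  have hBA : B ≤ A := hopt xt hxt0.le hxtxs
  have hcont : ContinuousOn lam (Set.Ici 0) := fun x hx =>
    (hdiff x hx).continuousAt.continuousWithinAt
  have hint : ∀ a b : ℝ, 0 ≤ a → a ≤ b → b ≤ xs →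
      IntervalIntegrable (fun x => lam x - r x) MeasureTheory.volume a b := by
    intro a b ha hab hbxs
    have hsub : Set.uIcc a b ⊆ Set.Ici 0 := by
      rw [Set.uIcc_of_le hab]
      exact fun y hy => le_trans ha hy.1
    exact ((hcont.mono hsub).intervalIntegrable).sub
      ((hrmono.mono hsub).intervalIntegrable)
  have hi1 := hint 0 xt le_rfl hxt0.le hxtxs
  have hi2 := hint xt xs hxt0.le hxtxs le_rfl
  -- deriv lam is nonpositive on (0, ∞)
  have hderiv_nonpos : ∀ x : ℝ, 0 < x → deriv lam x ≤ 0 := by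
    intro x hx
    have hd := (hdiff x hx.le).hasDerivAt
    have h1 : Filter.Tendsto (slope lam x) (nhdsWithin x (Set.Ioi x)) (nhds (deriv lam x)) :=
      (hasDerivAt_iff_tendsto_slope.mp hd).mono_left
        (nhdsWithin_mono x (fun y hy => Set.mem_compl_singleton_iff.mpr (ne_of_gt hy)))
    refine le_of_tendsto h1 ?_
    filter_upwards [self_mem_nhdsWithin] with y hy
    have hxy : x < y := hy
    have hle : lam y ≤ lam x := hanti hx.le (hx.trans hxy).le hxy.le
    rw [slope_def_field]
    exact div_nonpos_of_nonpos_of_nonneg (by linarith) (by linarith)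
  -- head lower bound
  have hhead : (A - B) * xt ≤ ∫ x in (0:ℝ)..xt, (lam x - r x) := by
    have hmono := intervalIntegral.integral_mono_on hxt0.le
      (intervalIntegrable_const : IntervalIntegrable (fun _ : ℝ => A - B) _ 0 xt) hi1
      (fun x hx => by
        have h1 : A ≤ lam x := hanti hx.1 hxt0.le hx.2
        have h2 : r x ≤ B := hrmono hx.1 hxt0.le hx.2
        show A - B ≤ lam x - r x
        linarith)
    rw [intervalIntegral.integral_const, sub_zero, smul_eq_mul, mul_comm] at hmono
    exact hmono
  set c := |deriv lam xt| / A with hcdef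
  have hc0 : 0 ≤ c := div_nonneg (abs_nonneg _) hA.le
  have hcA : c * A = |deriv lam xt| := by rw [hcdef]; exact div_mul_cancel₀ _ hA.ne'
  have hAB : A - B = (M : ℝ) * xt * (c * A) := by rw [hcA]; exact heq
  -- tail upper bound
  have htail : (∫ x in xt..xs, (lam x - r x)) ≤ (M : ℝ) * ((A - B) * xt) := by
    rcases eq_or_lt_of_le hc0 with hc | hc
    · -- c = 0 : A = B and the tail integrand is nonpositive
      have hAB0 : A - B = 0 := by rw [hAB, ← hc]; ring
      have hmono := intervalIntegral.integral_mono_on hxtxs hi2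
        (intervalIntegrable_const : IntervalIntegrable (fun _ : ℝ => (0:ℝ)) _ xt xs)
        (fun x hx => by
          have h1 : lam x ≤ A := hanti hxt0.le (hxt0.le.trans hx.1) hx.1
          have h2 : B ≤ r x := hrmono hxt0.le (hxt0.le.trans hx.1) hx.1
          show lam x - r x ≤ (0:ℝ)
          linarith)
      have h0 : (∫ x in xt..xs, (lam x - r x)) ≤ 0 := by simpa using hmono
      have h1 : (M : ℝ) * ((A - B) * xt) = 0 := by rw [hAB0]; ring
      linarith
    · -- c > 0 : exponential decay bound on [xt, xs]
      have hgd : ∀ x, 0 < x → HasDerivAt (fun y => lam y * Real.exp (c * y))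
          (deriv lam x * Real.exp (c * x) + lam x * (Real.exp (c * x) * c)) x := by
        intro x hx
        have h1 : HasDerivAt (fun y : ℝ => c * y) c x := by
          simpa using (hasDerivAt_id x).const_mul c
        have h2 : HasDerivAt (fun y : ℝ => Real.exp (c * y)) (Real.exp (c * x) * c) x :=
          (Real.hasDerivAt_exp (c * x)).comp x h1
        exact (hdiff x hx.le).hasDerivAt.mul h2
      have hg : AntitoneOn (fun x => lam x * Real.exp (c * x)) (Set.Icc xt xs) := by
        apply antitoneOn_of_deriv_nonpos (convex_Icc xt xs)
        · exact (hcont.mono (fun y hy => hxt0.le.trans hy.1)).mul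
            (Real.continuous_exp.comp (continuous_const.mul continuous_id)).continuousOn
        · intro x hx
          rw [interior_Icc] at hx
          exact (hgd x (hxt0.trans hx.1)).differentiableAt.differentiableWithinAt
        · intro x hx
          rw [interior_Icc] at hx
          have hxpos : 0 < x := hxt0.trans hx.1
          rw [(hgd x hxpos).deriv]
          have hlx : 0 < lam x := hpos x hxpos.le
          have hdx : deriv lam x ≤ 0 := hderiv_nonpos x hxpos
          have hmhr : c ≤ |deriv lam x| / lam x := hMHR hxt0.le hxpos.le hx.1.le
          rw [abs_of_nonpos hdx] at hmhr
          have hclam : c * lam x ≤ -deriv lam x := by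
            rw [← le_div_iff₀ hlx] at *
            linarith [hmhr]
          have hE : 0 < Real.exp (c * x) := Real.exp_pos _
          nlinarith
      have hexp : ∀ x ∈ Set.Icc xt xs, lam x ≤ A * Real.exp (-(c * (x - xt))) := by
        intro x hx
        have hgle : lam x * Real.exp (c * x) ≤ A * Real.exp (c * xt) :=
          hg ⟨le_rfl, hxtxs⟩ hx hx.1
        have hE : (0:ℝ) < Real.exp (c * x) := Real.exp_pos _
        calc lam x ≤ A * Real.exp (c * xt) / Real.exp (c * x) :=
              (le_div_iff₀ hE).mpr hgle
          _ = A * Real.exp (-(c * (x - xt))) := by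
              rw [mul_div_assoc, ← Real.exp_sub]; ring_nf
      have hiRHS : IntervalIntegrable (fun x => A * Real.exp (-(c * (x - xt))) - B)
          MeasureTheory.volume xt xs := by
        exact ((continuous_const.mul (Real.continuous_exp.comp
          ((continuous_const.mul (continuous_id.sub continuous_const)).neg))).sub
          continuous_const).intervalIntegrable _ _
      have hmono := intervalIntegral.integral_mono_on hxtxs hi2 hiRHS (fun x hx => by
        have h2 : B ≤ r x := hrmono hxt0.le (hxt0.le.trans hx.1) hx.1
        have h1 := hexp x hx
        show lam x - r x ≤ A * Real.exp (-(c * (x - xt))) - B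
        linarith)
      -- compute the RHS integral
      have hFint : (∫ x in xt..xs, (A * Real.exp (-(c * (x - xt))) - B))
          = A / c * (1 - Real.exp (-(c * (xs - xt)))) - B * (xs - xt) := by
        have hder : ∀ x ∈ Set.uIcc xt xs,
            HasDerivAt (fun y => -(A / c) * Real.exp (-(c * (y - xt))) - B * y)
              (A * Real.exp (-(c * (x - xt))) - B) x := by
          intro x _
          have h1 : HasDerivAt (fun y : ℝ => -(c * (y - xt))) (-c) x := by
            have := ((hasDerivAt_id x).sub_const xt).const_mul (-c)
            simpa [neg_mul] using this
          have h2 := (Real.hasDerivAt_exp _).comp x h1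
          have h3 := h2.const_mul (-(A / c))
          have h4 : HasDerivAt (fun y : ℝ => B * y) B x := by
            simpa using (hasDerivAt_id x).const_mul B
          have h5 := h3.sub h4
          refine h5.congr_deriv ?_
          rw [mul_comm (Real.exp _) (-c), ← mul_assoc, neg_mul_neg, div_mul_cancel₀ _ hc.ne']
        rw [intervalIntegral.integral_eq_sub_of_hasDerivAt hder hiRHS]
        simp [Real.exp_zero]
        ring
      rw [hFint] at hmono
      -- final arithmetic
      have hT : 0 ≤ xs - xt := by linarith
      have haux := aux_key_mhr (c * (xs - xt)) (B / A) (by positivity)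
        (by positivity)
      have hmul := mul_le_mul_of_nonneg_left haux (le_of_lt (div_pos hA hc) : (0:ℝ) ≤ A / c)
      have he1 : A / c * (B / A * (c * (xs - xt))) = B * (xs - xt) := by
        field_simp
      have he2 : A / c * (1 - B / A) ^ 2 = (M : ℝ) * ((A - B) * xt) := by
        have hv : 1 - B / A = (M : ℝ) * xt * c := by
          field_simp
          linarith [hAB]
        rw [hv, hAB]
        field_simp
      calc (∫ x in xt..xs, (lam x - r x))
          ≤ A / c * (1 - Real.exp (-(c * (xs - xt)))) - B * (xs - xt) := hmono
        _ ≤ (M : ℝ) * ((A - B) * xt) := by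
            rw [← he2, ← he1]
            have : A / c * (1 - Real.exp (-(c * (xs - xt))))
                - A / c * (B / A * (c * (xs - xt)))
                = A / c * (1 - Real.exp (-(c * (xs - xt))) - B / A * (c * (xs - xt))) := by
              ring
            linarith [hmul, this.le, this.ge]
  -- assemble
  have hsplit : (∫ x in (0:ℝ)..xt, (lam x - r x)) + (∫ x in xt..xs, (lam x - r x))
      = ∫ x in (0:ℝ)..xs, (lam x - r x) :=
    intervalIntegral.integral_add_adjacent_intervals hi1 hi2
  have hMhead : (M : ℝ) * ((A - B) * xt) ≤ (M : ℝ) * ∫ x in (0:ℝ)..xt, (lam x - r x) :=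
    mul_le_mul_of_nonneg_left hhead (by positivity)
  have hexpand : (1 + (M : ℝ)) * (∫ x in (0:ℝ)..xt, (lam x - r x))
      = (∫ x in (0:ℝ)..xt, (lam x - r x)) + (M : ℝ) * ∫ x in (0:ℝ)..xt, (lam x - r x) := by
    ring
  linarith
end

section
/- Let λ(x) = λ₀(1 − x^α) for constants λ₀ > 0 and α ≥ 1, defined on [0,1]. Let r be non-negative and non-decreasing. Suppose x̃ ∈ (0,1) satisfies λ(x̃) − r(x̃) = M·x̃·|λ'(x̃)| for an integer M ≥ 1, and x* satisfies λ(x*) ≥ r(x*). Then x*/x̃ ≤ (1 + Mα)^{1/α}. -/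
/-- For polynomial concave inverse demand `lam x = λ₀ (1 − x^α)` with `α ≥ 1`, the ratio
of the optimal magnitude `x*` to the equilibrium magnitude `x̃` is at most
`(1 + M α)^(1/α)`. -/
theorem ratio_bound_poly_demand
    (lam r : ℝ → ℝ) (lam0 a : ℝ) (hlam0 : 0 < lam0) (ha : 1 ≤ a)
    (hlam : ∀ x ∈ Set.Icc (0:ℝ) 1, lam x = lam0 * (1 - x ^ a))
    (hr0 : ∀ x ∈ Set.Icc (0:ℝ) 1, 0 ≤ r x)
    (hrmono : MonotoneOn r (Set.Icc (0:ℝ) 1))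
    (M : ℕ) (hM : 1 ≤ M)
    (xt : ℝ) (hxt : xt ∈ Set.Ioo (0:ℝ) 1)
    (heq : lam xt - r xt = M * xt * |deriv lam xt|)
    (xs : ℝ) (hxs : xs ∈ Set.Icc (0:ℝ) 1)
    (hopt : r xs ≤ lam xs) :
    xs / xt ≤ (1 + (M : ℝ) * a) ^ (1 / a) := by
  obtain ⟨hxt0, hxt1⟩ := hxt
  have ha0 : (0:ℝ) < a := lt_of_lt_of_le one_pos ha
  have hMa : (1:ℝ) ≤ 1 + (M : ℝ) * a := by
    have : (0:ℝ) ≤ (M:ℝ) * a := mul_nonneg (Nat.cast_nonneg M) ha0.le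
    linarith
  have hone : (1:ℝ) ≤ (1 + (M : ℝ) * a) ^ (1 / a) :=
    Real.one_le_rpow hMa (by positivity)
  -- derivative of lam at xt
  have hEq : lam =ᶠ[nhds xt] fun x => lam0 * (1 - x ^ a) := by
    filter_upwards [Ioo_mem_nhds hxt0 hxt1] with x hx
    exact hlam x ⟨hx.1.le, hx.2.le⟩
  have hderiv : deriv lam xt = -(lam0 * (a * xt ^ (a - 1))) := by
    have h1 : HasDerivAt (fun x : ℝ => lam0 * (1 - x ^ a))
        (lam0 * (0 - a * xt ^ (a - 1))) xt :=
      (((hasDerivAt_const xt (1:ℝ)).sub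
        (Real.hasDerivAt_rpow_const (Or.inl hxt0.ne')))).const_mul lam0
    rw [hEq.deriv_eq, h1.deriv]
    ring
  have habs : |deriv lam xt| = lam0 * (a * xt ^ (a - 1)) := by
    rw [hderiv, abs_neg, abs_of_nonneg]
    positivity
  have hpow : xt * xt ^ (a - 1) = xt ^ a := by
    nth_rewrite 1 [← Real.rpow_one xt]
    rw [← Real.rpow_add hxt0]
    ring_nf
  have hxtIcc : xt ∈ Set.Icc (0:ℝ) 1 := ⟨hxt0.le, hxt1.le⟩
  have heq' : lam0 * (1 - xt ^ a) - r xt = (M:ℝ) * lam0 * (a * xt ^ a) := by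
    rw [hlam xt hxtIcc] at heq
    rw [heq, habs]
    rw [← hpow]
    ring
  rcases le_or_gt xs xt with h | h
  · calc xs / xt ≤ 1 := by
          rw [div_le_one hxt0]; exact h
      _ ≤ _ := hone
  · -- xs ^ a ≤ (1 + M * a) * xt ^ a
    have hrle : r xt ≤ r xs := hrmono hxtIcc hxs h.le
    have hopt' : r xs ≤ lam0 * (1 - xs ^ a) := by rwa [hlam xs hxs] at hopt
    have key : xs ^ a ≤ (1 + (M:ℝ) * a) * xt ^ a := by
      have hM1 : (1:ℝ) ≤ (M:ℝ) := by exact_mod_cast hM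
      nlinarith [hlam0]
    have hxs0 : 0 ≤ xs := hxs.1
    have hxsle : xs ≤ (1 + (M:ℝ) * a) ^ (1 / a) * xt := by
      have h1 : (xs ^ a) ^ (1 / a) ≤ ((1 + (M:ℝ) * a) * xt ^ a) ^ (1 / a) :=
        Real.rpow_le_rpow (by positivity) key (by positivity)
      have h2 : (xs ^ a) ^ (1 / a) = xs := by
        rw [← Real.rpow_mul hxs0, mul_one_div, div_self ha0.ne', Real.rpow_one]
      have h3 : ((1 + (M:ℝ) * a) * xt ^ a) ^ (1 / a)
          = (1 + (M:ℝ) * a) ^ (1 / a) * xt := by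
        rw [Real.mul_rpow (by linarith) (by positivity),
          ← Real.rpow_mul hxt0.le, mul_one_div, div_self ha0.ne', Real.rpow_one]
      rw [h2, h3] at h1
      exact h1
    rw [div_le_iff₀ hxt0]
    exact hxsle
end

section
/- Let λ(x) = λ₀(1−x)^α on [0,1] with λ₀ > 0, α ≥ 1, and let r be non-negative and non-decreasing with r(x̃) = λ(x̃) − M·α·x̃·λ₀(1−x̃)^{α−1} for some x̃ ∈ (0,1) and integer M ≥ 1 (equilibrium condition). Let x* ∈ [x̃,1] satisfy λ(x*) ≥ r(x*). Then ∫₀^{x*}(λ(x) − r(x))dx ≤ (1 + M·α/(α+1)) · ∫₀^{x̃}(λ(x) − r(x))dx. -/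
open Real Set intervalIntegral

/-- Bernoulli-type inequality in normalized form. -/
lemma qkey {q aa : ℝ} (hq0 : 0 ≤ q) (hq1 : q ≤ 1) (ha : 1 ≤ aa) :
    1 - q ^ (aa + 1) - (aa + 1) * (1 - q) * q ^ aa ≤ (1 - q ^ aa) ^ 2 := by
  have ha0 : (0:ℝ) < aa := lt_of_lt_of_le one_pos ha
  rcases eq_or_lt_of_le hq0 with h0 | h0
  · rw [← h0, Real.zero_rpow (by positivity), Real.zero_rpow ha0.ne']
    norm_num
  · have hqa1 : q ^ (aa + 1) = q ^ aa * q := Real.rpow_add_one h0.ne' aa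
    have hbern : 1 + aa * (q - 1) ≤ q ^ aa := by
      have := one_add_mul_self_le_rpow_one_add (by linarith : (-1:ℝ) ≤ q - 1) ha
      simpa using this
    have hy0 : 0 ≤ q ^ aa := Real.rpow_nonneg hq0 _
    nlinarith [mul_nonneg hy0 (by linarith : 0 ≤ q ^ aa - 1 + aa * (1 - q))]

/-- Key algebraic inequality. -/
lemma ukey {u s aa : ℝ} (ha : 1 ≤ aa) (hu : 0 < u) (hs : 0 ≤ s) (hsu : s ≤ u) :
    u ^ (aa - 1) * (u ^ (aa + 1) - s ^ (aa + 1) - (aa + 1) * (u - s) * s ^ aa)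
      ≤ (u ^ aa - s ^ aa) ^ 2 := by
  obtain ⟨q, hq0, hq1, rfl⟩ : ∃ q, 0 ≤ q ∧ q ≤ 1 ∧ s = q * u :=
    ⟨s / u, by positivity, by rw [div_le_one hu]; exact hsu,
      (div_mul_cancel₀ s hu.ne').symm⟩
  rw [Real.mul_rpow hq0 hu.le, Real.mul_rpow hq0 hu.le]
  have E1 : u ^ (aa - 1) * u ^ (aa + 1) = u ^ aa * u ^ aa := by
    rw [← Real.rpow_add hu, ← Real.rpow_add hu]; ring_nf
  have E2 : u ^ (aa + 1) = u ^ aa * u := Real.rpow_add_one hu.ne' aa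
  have hq := qkey hq0 hq1 ha
  have hR : 0 ≤ u ^ aa * u ^ aa := by positivity
  have key : u ^ (aa - 1) * (u ^ (aa + 1) - q ^ (aa + 1) * u ^ (aa + 1)
        - (aa + 1) * (u - q * u) * (q ^ aa * u ^ aa))
      = (u ^ aa * u ^ aa) * (1 - q ^ (aa + 1) - (aa + 1) * (1 - q) * q ^ aa) := by
    linear_combination (1 - q ^ (aa + 1)) * E1 - (aa + 1) * (1 - q) * q ^ aa * E1
      + (aa + 1) * (1 - q) * q ^ aa * u ^ (aa - 1) * E2
  have key2 : (u ^ aa - q ^ aa * u ^ aa) ^ 2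
      = (u ^ aa * u ^ aa) * (1 - q ^ aa) ^ 2 := by ring
  rw [key, key2]
  exact mul_le_mul_of_nonneg_left hq hR

/-- integral of `lam0 * (1-x)^aa`. -/
lemma integral_one_sub_rpow (lam0 aa p q : ℝ) (ha : 0 < aa) :
    ∫ x in p..q, lam0 * (1 - x) ^ aa
      = lam0 * (((1 - p) ^ (aa + 1) - (1 - q) ^ (aa + 1)) / (aa + 1)) := by
  rw [intervalIntegral.integral_const_mul]
  have h := intervalIntegral.integral_comp_sub_left (a := p) (b := q)
    (fun v : ℝ => v ^ aa) 1
  rw [h, integral_rpow (Or.inl (by linarith))]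

/-- `(1-u)*u^aa ≤ (1 - u^(aa+1))/(aa+1)` for `0 ≤ u ≤ 1`. -/
lemma aux_concave {u aa : ℝ} (hu0 : 0 ≤ u) (hu1 : u ≤ 1) (ha : 0 < aa) :
    (1 - u) * u ^ aa ≤ (1 - u ^ (aa + 1)) / (aa + 1) := by
  have h1 : 0 ≤ ∫ v in u..(1:ℝ), (v ^ aa - u ^ aa) := by
    apply intervalIntegral.integral_nonneg hu1
    intro v hv
    have : u ^ aa ≤ v ^ aa := Real.rpow_le_rpow hu0 hv.1 ha.le
    linarith
  have h2 : ∫ v in u..(1:ℝ), (v ^ aa - u ^ aa)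
      = (1 - u ^ (aa + 1)) / (aa + 1) - (1 - u) * u ^ aa := by
    rw [intervalIntegral.integral_sub (intervalIntegrable_rpow (Or.inl ha.le))
      intervalIntegrable_const, integral_rpow (Or.inl (by linarith)),
      intervalIntegral.integral_const, Real.one_rpow, smul_eq_mul]
    try ring
  linarith [h2 ▸ h1]

set_option maxHeartbeats 1000000 in
/-- Efficiency bound `1 + M·α/(α+1)` for constant-elasticity inverse demand
`lam x = λ₀ (1−x)^α`. -/
theorem efficiency_bound_ced
    (lam r : ℝ → ℝ) (lam0 a : ℝ) (hlam0 : 0 < lam0) (ha : 1 ≤ a)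
    (hlam : ∀ x ∈ Set.Icc (0:ℝ) 1, lam x = lam0 * (1 - x) ^ a)
    (hr0 : ∀ x ∈ Set.Icc (0:ℝ) 1, 0 ≤ r x)
    (hrmono : MonotoneOn r (Set.Icc (0:ℝ) 1))
    (M : ℕ) (hM : 1 ≤ M)
    (xt : ℝ) (hxt : xt ∈ Set.Ioo (0:ℝ) 1)
    (heq : r xt = lam xt - M * a * xt * (lam0 * (1 - xt) ^ (a - 1)))
    (xs : ℝ) (hxs : xs ∈ Set.Icc xt 1)
    (hopt : r xs ≤ lam xs) :
    ∫ x in (0:ℝ)..xs, (lam x - r x) ≤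
      (1 + (M : ℝ) * a / (a + 1)) * ∫ x in (0:ℝ)..xt, (lam x - r x) := by
  obtain ⟨hxt0, hxt1⟩ := hxt
  obtain ⟨hxs1, hxs2⟩ := hxs
  have ha0 : (0:ℝ) < a := lt_of_lt_of_le one_pos ha
  set u : ℝ := 1 - xt with hu_def
  set c : ℝ := (M : ℝ) * a with hc_def
  clear_value u
  have hu0 : 0 < u := by rw [hu_def]; linarith
  have hu1 : u < 1 := by rw [hu_def]; linarith
  have hc1 : 1 ≤ c := by
    have h1 : (1:ℝ) ≤ (M:ℝ) := by exact_mod_cast hM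
    rw [hc_def]; nlinarith
  clear_value c
  set K : ℝ := u ^ a - c * (1 - u) * u ^ (a - 1) with hK_def
  clear_value K
  have hxtu : xt = 1 - u := by rw [hu_def]; ring
  have hrt : r xt = lam0 * K := by
    rw [heq, hlam xt ⟨hxt0.le, hxt1.le⟩, hK_def, ← hu_def, hxtu]; ring
  have hK0 : 0 ≤ K := by
    have h := hr0 xt ⟨hxt0.le, hxt1.le⟩
    rw [hrt] at h
    nlinarith
  have hKu : K ≤ u ^ a := by
    have h1 : 0 ≤ c * (1 - u) * u ^ (a - 1) :=
      mul_nonneg (mul_nonneg (by linarith) (by linarith))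
        (Real.rpow_nonneg hu0.le (a - 1))
    rw [hK_def]; linarith
  set s : ℝ := K ^ a⁻¹ with hs_def
  clear_value s
  have hsa : s ^ a = K := by rw [hs_def]; exact Real.rpow_inv_rpow hK0 ha0.ne'
  have hs0 : 0 ≤ s := by rw [hs_def]; exact Real.rpow_nonneg hK0 _
  have hsu : s ≤ u := by
    rw [hs_def]
    have h1 : K ^ a⁻¹ ≤ (u ^ a) ^ a⁻¹ :=
      Real.rpow_le_rpow hK0 hKu (by positivity)
    rwa [Real.rpow_rpow_inv hu0.le ha0.ne'] at h1
  have hGc : Continuous (fun x : ℝ => lam0 * (1 - x) ^ a) :=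
    continuous_const.mul
      ((continuous_const.sub continuous_id).rpow_const (fun x => Or.inr ha0.le))
  have hFi : ∀ p q : ℝ, IntervalIntegrable (fun x : ℝ => lam0 * (1 - x) ^ a)
      MeasureTheory.volume p q :=
    fun p q => hGc.intervalIntegrable p q
  have hri : ∀ p q : ℝ, 0 ≤ p → p ≤ q → q ≤ 1 →
      IntervalIntegrable r MeasureTheory.volume p q := by
    intro p q hp hpq hq
    apply MonotoneOn.intervalIntegrable
    apply hrmono.mono
    rw [Set.uIcc_of_le hpq]
    exact Set.Icc_subset_Icc hp hq
  have hcong : ∀ p q : ℝ, 0 ≤ p → p ≤ q → q ≤ 1 →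
      (∫ x in p..q, (lam x - r x)) = ∫ x in p..q, (lam0 * (1 - x) ^ a - r x) := by
    intro p q hp hpq hq
    apply intervalIntegral.integral_congr
    intro x hx
    rw [Set.uIcc_of_le hpq] at hx
    show lam x - r x = lam0 * (1 - x) ^ a - r x
    rw [hlam x ⟨le_trans hp hx.1, le_trans hx.2 hq⟩]
  have hxt01 : (0:ℝ) ≤ xt := hxt0.le
  have hxs0 : (0:ℝ) ≤ xs := le_trans hxt01 hxs1
  have hsplit : (∫ x in (0:ℝ)..xs, (lam0 * (1 - x) ^ a - r x))
      = (∫ x in (0:ℝ)..xt, (lam0 * (1 - x) ^ a - r x)) + ∫ x in xt..xs, (lam0 * (1 - x) ^ a - r x) := by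
    rw [intervalIntegral.integral_add_adjacent_intervals
      ((hFi 0 xt).sub (hri 0 xt le_rfl hxt01 hxt1.le))
      ((hFi xt xs).sub (hri xt xs hxt01 hxs1 hxs2))]
  have hgap1 : (∫ x in xt..xs, (lam0 * (1 - x) ^ a - r x)) ≤ ∫ x in xt..xs, (lam0 * (1 - x) ^ a - r xt) := by
    apply intervalIntegral.integral_mono_on hxs1
      ((hFi xt xs).sub (hri xt xs hxt01 hxs1 hxs2))
      ((hFi xt xs).sub intervalIntegrable_const)
    intro x hx
    have : r xt ≤ r x := hrmono ⟨hxt01, hxt1.le⟩ ⟨le_trans hxt01 hx.1, le_trans hx.2 hxs2⟩ hx.1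
    linarith
  set xb : ℝ := 1 - s with hxb_def
  clear_value xb
  have hxtb : xt ≤ xb := by rw [hxb_def, hxtu]; linarith
  have hxb1 : xb ≤ 1 := by rw [hxb_def]; linarith
  have hrts : r xt = lam0 * s ^ a := by rw [hrt, hsa]
  have hgap2 : (∫ x in xt..xs, (lam0 * (1 - x) ^ a - r xt)) ≤ ∫ x in xt..xb, (lam0 * (1 - x) ^ a - r xt) := by
    rcases le_total xs xb with hcase | hcase
    · have hadd : (∫ x in xt..xb, (lam0 * (1 - x) ^ a - r xt))
          = (∫ x in xt..xs, (lam0 * (1 - x) ^ a - r xt)) + ∫ x in xs..xb, (lam0 * (1 - x) ^ a - r xt) :=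
        (intervalIntegral.integral_add_adjacent_intervals
          ((hFi xt xs).sub intervalIntegrable_const)
          ((hFi xs xb).sub intervalIntegrable_const)).symm
      have hpos : 0 ≤ ∫ x in xs..xb, (lam0 * (1 - x) ^ a - r xt) := by
        apply intervalIntegral.integral_nonneg hcase
        intro x hx
        have h1 : s ≤ 1 - x := by
          have hx2 := hx.2; rw [hxb_def] at hx2; linarith
        have h2 : s ^ a ≤ (1 - x) ^ a := Real.rpow_le_rpow hs0 h1 ha0.le
        show (0:ℝ) ≤ lam0 * (1 - x) ^ a - r xt
        rw [hrts]
        nlinarith [mul_le_mul_of_nonneg_left h2 hlam0.le]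
      linarith
    · have hadd : (∫ x in xt..xs, (lam0 * (1 - x) ^ a - r xt))
          = (∫ x in xt..xb, (lam0 * (1 - x) ^ a - r xt)) + ∫ x in xb..xs, (lam0 * (1 - x) ^ a - r xt) :=
        (intervalIntegral.integral_add_adjacent_intervals
          ((hFi xt xb).sub intervalIntegrable_const)
          ((hFi xb xs).sub intervalIntegrable_const)).symm
      have hneg : (∫ x in xb..xs, (lam0 * (1 - x) ^ a - r xt)) ≤ 0 := by
        have h0 : (∫ x in xb..xs, (0:ℝ)) = 0 := by simp
        rw [← h0]
        apply intervalIntegral.integral_mono_on hcase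
          ((hFi xb xs).sub intervalIntegrable_const) intervalIntegrable_const
        intro x hx
        have h1 : 1 - x ≤ s := by
          have hx1 := hx.1; rw [hxb_def] at hx1; linarith
        have h1' : 0 ≤ 1 - x := by linarith [le_trans hx.2 hxs2]
        have h2 : (1 - x) ^ a ≤ s ^ a := Real.rpow_le_rpow h1' h1 ha0.le
        show lam0 * (1 - x) ^ a - r xt ≤ (0:ℝ)
        rw [hrts]
        nlinarith [mul_le_mul_of_nonneg_left h2 hlam0.le]
      linarith
  have hgap3 : (∫ x in xt..xb, (lam0 * (1 - x) ^ a - r xt))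
      = lam0 * ((u ^ (a + 1) - s ^ (a + 1)) / (a + 1)) - (u - s) * (lam0 * s ^ a) := by
    rw [intervalIntegral.integral_sub (hGc.intervalIntegrable xt xb)
      intervalIntegrable_const,
      intervalIntegral.integral_const, hrts,
      integral_one_sub_rpow lam0 a xt xb ha0, ← hu_def]
    have e2 : 1 - xb = s := by rw [hxb_def]; ring
    have e3 : xb - xt = u - s := by rw [hxb_def, hxtu]; ring
    rw [e2, e3, smul_eq_mul]
    try ring
  have hden1 : (∫ x in (0:ℝ)..xt, (lam0 * (1 - x) ^ a - r xt)) ≤ ∫ x in (0:ℝ)..xt, (lam0 * (1 - x) ^ a - r x) := by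
    apply intervalIntegral.integral_mono_on hxt01
      ((hFi 0 xt).sub intervalIntegrable_const)
      ((hFi 0 xt).sub (hri 0 xt le_rfl hxt01 hxt1.le))
    intro x hx
    have : r x ≤ r xt := hrmono ⟨hx.1, le_trans hx.2 hxt1.le⟩ ⟨hxt01, hxt1.le⟩ hx.2
    linarith
  have hden2 : (∫ x in (0:ℝ)..xt, (lam0 * (1 - x) ^ a - r xt))
      = lam0 * ((1 - u ^ (a + 1)) / (a + 1)) - (1 - u) * (lam0 * s ^ a) := by
    rw [intervalIntegral.integral_sub (hGc.intervalIntegrable 0 xt)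
      intervalIntegrable_const,
      intervalIntegral.integral_const, hrts,
      integral_one_sub_rpow lam0 a 0 xt ha0, ← hu_def]
    rw [smul_eq_mul, sub_zero, Real.one_rpow, ← hxtu]
    have hx2 : xt = 1 - u := hxtu
    rw [hx2]
    try ring
  set A : ℝ := (u ^ (a + 1) - s ^ (a + 1)) / (a + 1) - (u - s) * s ^ a with hA_def
  set B : ℝ := (1 - u ^ (a + 1)) / (a + 1) - (1 - u) * s ^ a with hB_def
  clear_value A B
  have hP : u ^ a - s ^ a = c * (1 - u) * u ^ (a - 1) := by
    rw [hsa, hK_def]; ring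
  have hBlow : (1 - u) * (u ^ a - s ^ a) ≤ B := by
    have h1 := aux_concave hu0.le hu1.le ha0
    have hs' : 0 ≤ s ^ a := Real.rpow_nonneg hs0 _
    rw [hB_def]
    linarith
  have hua1 : 0 < u ^ (a - 1) := Real.rpow_pos_of_pos hu0 _
  have hAB : A ≤ c / (a + 1) * B := by
    have hk := ukey ha hu0 hs0 hsu
    have h1 : (a + 1) * A * u ^ (a - 1) ≤ c * (1 - u) * u ^ (a - 1) * (u ^ a - s ^ a) := by
      have e : (a + 1) * A * u ^ (a - 1)
          = u ^ (a - 1) * (u ^ (a + 1) - s ^ (a + 1) - (a + 1) * (u - s) * s ^ a) := by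
        rw [hA_def]; field_simp
      have e2 : (u ^ a - s ^ a) ^ 2 = c * (1 - u) * u ^ (a - 1) * (u ^ a - s ^ a) := by
        rw [hP]; ring
      rw [e]
      linarith [hk, e2.symm.le, e2.le]
    have h2 : (a + 1) * A ≤ c * (1 - u) * (u ^ a - s ^ a) := by
      have h2' := (mul_le_mul_iff_of_pos_right hua1).mp
        (by linarith : (a + 1) * A * u ^ (a - 1)
          ≤ (c * (1 - u) * (u ^ a - s ^ a)) * u ^ (a - 1))
      linarith
    have h3 : c * ((1 - u) * (u ^ a - s ^ a)) ≤ c * B :=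
      mul_le_mul_of_nonneg_left hBlow (by linarith)
    rw [div_mul_eq_mul_div, le_div_iff₀ (by linarith : (0:ℝ) < a + 1)]
    nlinarith [h2, h3]
  have hPnn : 0 ≤ u ^ a - s ^ a := by
    rw [hP]
    exact mul_nonneg (mul_nonneg (by linarith) (by linarith)) hua1.le
  have hBnn : 0 ≤ B :=
    le_trans (mul_nonneg (by linarith) hPnn) hBlow
  have hgap : (∫ x in xt..xs, (lam0 * (1 - x) ^ a - r x)) ≤ lam0 * A := by
    calc (∫ x in xt..xs, (lam0 * (1 - x) ^ a - r x)) ≤ ∫ x in xt..xb, (lam0 * (1 - x) ^ a - r xt) :=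
          le_trans hgap1 hgap2
      _ = lam0 * A := by rw [hgap3, hA_def]; ring
  have hden : lam0 * B ≤ ∫ x in (0:ℝ)..xt, (lam0 * (1 - x) ^ a - r x) := by
    calc lam0 * B = ∫ x in (0:ℝ)..xt, (lam0 * (1 - x) ^ a - r xt) := by rw [hden2, hB_def]; ring
      _ ≤ _ := hden1
  rw [hcong 0 xs le_rfl hxs0 hxs2, hcong 0 xt le_rfl hxt01 hxt1.le, hsplit]
  have hfrac : 0 ≤ c / (a + 1) := by positivity
  have hlamA : lam0 * A ≤ c / (a + 1) * (lam0 * B) := by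
    have := mul_le_mul_of_nonneg_left hAB hlam0.le
    calc lam0 * A ≤ lam0 * (c / (a + 1) * B) := this
      _ = c / (a + 1) * (lam0 * B) := by ring
  have hfinal : c / (a + 1) * (lam0 * B) ≤ c / (a + 1) * ∫ x in (0:ℝ)..xt, (lam0 * (1 - x) ^ a - r x) :=
    mul_le_mul_of_nonneg_left hden hfrac
  have hgoal : (1 + c / (a + 1)) * (∫ x in (0:ℝ)..xt, (lam0 * (1 - x) ^ a - r x))
      = (∫ x in (0:ℝ)..xt, (lam0 * (1 - x) ^ a - r x))
        + c / (a + 1) * ∫ x in (0:ℝ)..xt, (lam0 * (1 - x) ^ a - r x) := by ring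
  rw [hgoal]
  linarith [hgap, hlamA, hfinal]
end

section
/- Suppose λ and r satisfy λ(x) − r(x) = |ln(x/a)|^{1/α} for all x ∈ (0,a], where a > 0 and α ≥ 1, with λ differentiable, non-increasing and r non-decreasing. If x̃ ∈ (0,a) satisfies λ(x̃) − r(x̃) = M·x̃·|λ'(x̃)| for integer M ≥ 1, then x̃ ≥ a·e^{−M/α}; consequently, if x* ≤ a is the optimal flow magnitude, then x*/x̃ ≤ e^{M/α}. -/
open Real Filter Set Topology

/-- derivative of a function monotone on a right neighborhood is nonneg. -/
lemma deriv_nonneg_of_monotoneOn_aux {f : ℝ → ℝ} {s : Set ℝ} {x b d : ℝ}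
    (hx : x ∈ s) (hxb : x < b) (hsub : Set.Ioo x b ⊆ s)
    (hmono : MonotoneOn f s) (hd : HasDerivAt f d x) : 0 ≤ d := by
  have h := hasDerivAt_iff_tendsto_slope.1 hd
  have h' : Tendsto (slope f x) (𝓝[>] x) (𝓝 d) :=
    h.mono_left (nhdsWithin_mono x fun y hy => ne_of_gt hy)
  refine ge_of_tendsto h' ?_
  filter_upwards [Ioo_mem_nhdsGT_of_mem ⟨le_refl x, hxb⟩] with y hy
  rw [slope_def_field, div_eq_inv_mul]
  exact mul_nonneg (inv_nonneg.2 (sub_nonneg.2 hy.1.le))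
    (sub_nonneg.2 (hmono hx (hsub hy) hy.1.le))

/-- Logarithmic net demand: if `lam x − r x = |ln(x/a)|^(1/α)` on `(0,a]`, then the
equilibrium magnitude satisfies `x̃ ≥ a·e^(−M/α)`, and hence for any optimal magnitude
`x* ≤ a` the ratio `x*/x̃` is at most `e^(M/α)`. -/
theorem ratio_bound_log_demand
    (lam r : ℝ → ℝ) (a α : ℝ) (ha : 0 < a) (hα : 1 ≤ α)
    (hnet : ∀ x ∈ Set.Ioc 0 a, lam x - r x = |Real.log (x / a)| ^ (1 / α))
    (hdiff : ∀ x ∈ Set.Ioc 0 a, DifferentiableAt ℝ lam x)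
    (hanti : AntitoneOn lam (Set.Ioc 0 a))
    (hrmono : MonotoneOn r (Set.Ioc 0 a))
    (M : ℕ) (hM : 1 ≤ M)
    (xt : ℝ) (hxt : xt ∈ Set.Ioo 0 a)
    (heq : lam xt - r xt = M * xt * |deriv lam xt|) :
    a * Real.exp (-(M : ℝ) / α) ≤ xt ∧
      ∀ xs : ℝ, xs ≤ a → xs / xt ≤ Real.exp ((M : ℝ) / α) := by
  obtain ⟨hxt0, hxta⟩ := hxt
  have hαpos : (0 : ℝ) < α := lt_of_lt_of_le one_pos hα
  -- L = log (a / xt) > 0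
  set L : ℝ := Real.log a - Real.log xt with hL
  have hLpos : 0 < L := sub_pos.2 (Real.log_lt_log hxt0 hxta)
  -- the net function as an rpow of a nice function
  set g : ℝ → ℝ := fun x => (Real.log a - Real.log x) ^ (1 / α) with hg
  -- derivative of g at xt
  have hu : HasDerivAt (fun x => Real.log a - Real.log x) (-(1 / xt)) xt := by
    simpa using ((Real.hasDerivAt_log (ne_of_gt hxt0)).const_sub (Real.log a))
  have hgd : HasDerivAt g ((1 / α) * L ^ (1 / α - 1) * (-(1 / xt))) xt := by
    have := (Real.hasDerivAt_rpow_const (x := L) (p := 1 / α)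
      (Or.inl (ne_of_gt hLpos))).comp xt hu
    exact this
  -- on Ioo 0 a, |log (x/a)| = log a - log x
  have habs : ∀ x ∈ Set.Ioo 0 a, |Real.log (x / a)| = Real.log a - Real.log x := by
    intro x hx
    rw [Real.log_div (ne_of_gt hx.1) (ne_of_gt ha), abs_of_nonpos]
    · ring
    · exact sub_nonpos.2 (Real.log_le_log hx.1 hx.2.le)
  -- r equals lam - g near xt
  have hrg : r =ᶠ[𝓝 xt] fun x => lam x - g x := by
    filter_upwards [Ioo_mem_nhds hxt0 hxta] with x hx
    have h1 := hnet x ⟨hx.1, hx.2.le⟩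
    rw [habs x hx] at h1
    simp only [hg]
    linarith [h1]
  have hlamd : DifferentiableAt ℝ lam xt := hdiff xt ⟨hxt0, hxta.le⟩
  have hrd : HasDerivAt r (deriv lam xt - (1 / α) * L ^ (1 / α - 1) * (-(1 / xt))) xt := by
    have := (hlamd.hasDerivAt.sub hgd)
    exact this.congr_of_eventuallyEq hrg
  -- r' ≥ 0
  have hr' : 0 ≤ deriv lam xt - (1 / α) * L ^ (1 / α - 1) * (-(1 / xt)) := by
    refine deriv_nonneg_of_monotoneOn_aux (s := Set.Ioc 0 a) ⟨hxt0, hxta.le⟩ hxta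
      (fun y hy => ⟨hxt0.trans hy.1, hy.2.le⟩) hrmono hrd
  -- lam' ≤ 0
  have hlam' : deriv lam xt ≤ 0 := by
    have : 0 ≤ -deriv lam xt := by
      refine deriv_nonneg_of_monotoneOn_aux (s := Set.Ioc 0 a) ⟨hxt0, hxta.le⟩ hxta
        (fun y hy => ⟨hxt0.trans hy.1, hy.2.le⟩) (fun u hu v hv huv => by
          simpa using neg_le_neg (hanti hu hv huv)) hlamd.hasDerivAt.neg
    linarith
  have habsd : |deriv lam xt| = -deriv lam xt := abs_of_nonpos hlam'
  -- bound on |lam'|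
  have hbound : |deriv lam xt| ≤ (1 / α) * L ^ (1 / α - 1) * (1 / xt) := by
    rw [habsd]; nlinarith [hr']
  -- key inequality: L ≤ M / α
  have hLM : L ≤ (M : ℝ) / α := by
    have hnetxt := hnet xt ⟨hxt0, hxta.le⟩
    rw [habs xt ⟨hxt0, hxta⟩] at hnetxt
    have hMpos : (0 : ℝ) < M := by exact_mod_cast hM
    have h1 : L ^ (1 / α) ≤ (M : ℝ) * xt * ((1 / α) * L ^ (1 / α - 1) * (1 / xt)) := by
      rw [← hL] at hnetxt
      calc L ^ (1 / α) = (M : ℝ) * xt * |deriv lam xt| := by rw [← hnetxt]; exact heq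
        _ ≤ _ := by
          apply mul_le_mul_of_nonneg_left hbound
          positivity
    have h2 : (M : ℝ) * xt * ((1 / α) * L ^ (1 / α - 1) * (1 / xt))
        = ((M : ℝ) / α) * L ^ (1 / α - 1) := by
      field_simp
    have h3 : L ^ (1 / α) = L ^ (1 / α - 1) * L := by
      rw [← Real.rpow_add_one (ne_of_gt hLpos)]; ring_nf
    rw [h2, h3] at h1
    have hpow : 0 < L ^ (1 / α - 1) := Real.rpow_pos_of_pos hLpos _
    have h1' : L * L ^ (1 / α - 1) ≤ ((M : ℝ) / α) * L ^ (1 / α - 1) := by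
      rw [mul_comm]; exact h1
    exact le_of_mul_le_mul_right h1' hpow
  -- conclude
  have hmain : a * Real.exp (-(M : ℝ) / α) ≤ xt := by
    have h4 : Real.log a - (M : ℝ) / α ≤ Real.log xt := by linarith [hLM]
    have := Real.exp_le_exp.2 h4
    rw [neg_div, Real.exp_neg, ← div_eq_mul_inv]
    rwa [Real.exp_sub, Real.exp_log ha, Real.exp_log hxt0] at this
  refine ⟨hmain, fun xs hxs => ?_⟩
  have hexp : 0 < Real.exp (-(M : ℝ) / α) := Real.exp_pos _
  calc xs / xt ≤ a / xt := by gcongr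
    _ ≤ Real.exp ((M : ℝ) / α) := by
        rw [div_le_iff₀ hxt0]
        have : a = a * Real.exp (-(M : ℝ) / α) * Real.exp ((M : ℝ) / α) := by
          rw [mul_assoc, ← Real.exp_add, neg_div, neg_add_cancel, Real.exp_zero, mul_one]
        nlinarith [hmain, Real.exp_pos ((M : ℝ) / α)]
end

section
/- Let λ be a positive, non-increasing, differentiable MPE function (x·|λ'(x)|/λ(x) non-decreasing) with strictly positive r that is non-decreasing. Suppose x̃ < x* satisfies λ(x̃) − r(x̃) = M·x̃·|λ'(x̃)| with λ'(x̃) < 0 and M ≥ 1 an integer, where λ(x̃) ≥ r(x̃). Then for all x > x̃ (with x ≤ x*): λ(x) − r(x) < M·x·|λ'(x)|, and for all 0 < x < x̃: λ(x) − r(x) > M·x·|λ'(x)|. -/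
/-- If a function is constant on a nontrivial closed interval and differentiable at a point of
that interval, then its derivative there is zero. -/
lemma const_on_Icc_deriv_eq_zero (lam : ℝ → ℝ) (a b c : ℝ) (hab : a < b)
    (hc : c ∈ Set.Icc a b) (hd : DifferentiableAt ℝ lam c)
    (hconst : ∀ y ∈ Set.Icc a b, lam y = lam c) :
    deriv lam c = 0 := by
  have hUD := (uniqueDiffOn_Icc hab) c hc
  have h1 : HasDerivWithinAt lam 0 (Set.Icc a b) c :=
    (hasDerivWithinAt_const c (Set.Icc a b) (lam c)).congr hconst rfl
  have h2 : HasDerivWithinAt lam (deriv lam c) (Set.Icc a b) c :=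
    hd.hasDerivAt.hasDerivWithinAt
  have e1 := h1.derivWithin hUD
  have e2 := h2.derivWithin hUD
  rw [e1] at e2
  exact e2.symm

/-- Uniqueness of the equilibrium point: for MPE inverse demand with strictly positive,
non-decreasing `r`, the function `lam x − r x − M·x·|lam' x|` changes sign exactly once
at the equilibrium point `x̃`. -/
theorem equilibrium_unique_sign_change
    (lam r : ℝ → ℝ) (xs : ℝ)
    (hpos : ∀ x ∈ Set.Ioc 0 xs, 0 < lam x)
    (hanti : AntitoneOn lam (Set.Ioc 0 xs))
    (hdiff : ∀ x ∈ Set.Ioc 0 xs, DifferentiableAt ℝ lam x)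
    (hMPE : MonotoneOn (fun x => x * |deriv lam x| / lam x) (Set.Ioc 0 xs))
    (hrpos : ∀ x ∈ Set.Ioc 0 xs, 0 < r x)
    (hrmono : MonotoneOn r (Set.Ioc 0 xs))
    (M : ℕ) (hM : 1 ≤ M)
    (xt : ℝ) (hxt : xt ∈ Set.Ioc 0 xs) (hxtlt : xt < xs)
    (hlam' : deriv lam xt < 0)
    (hge : r xt ≤ lam xt)
    (heq : lam xt - r xt = M * xt * |deriv lam xt|) :
    (∀ x, xt < x → x ≤ xs → lam x - r x < M * x * |deriv lam x|) ∧
    (∀ x, 0 < x → x < xt → M * x * |deriv lam x| < lam x - r x) := by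
  have hlxt := hpos xt hxt
  have hrxt := hrpos xt hxt
  have hM1 : (1 : ℝ) ≤ (M : ℝ) := by exact_mod_cast hM
  constructor
  · intro x hlt hle
    have hx : x ∈ Set.Ioc 0 xs := ⟨lt_trans hxt.1 hlt, hle⟩
    have hlx := hpos x hx
    have hrx := hrpos x hx
    have hlle : lam x ≤ lam xt := hanti hxt hx (le_of_lt hlt)
    have hrle : r xt ≤ r x := hrmono hxt hx (le_of_lt hlt)
    have hmpe := hMPE hxt hx (le_of_lt hlt)
    simp only at hmpe
    rw [div_le_div_iff₀ hlxt hlx] at hmpe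
    -- case split on lam x < lam xt or equal
    rcases lt_or_eq_of_le hlle with hstrict | heqlam
    · -- strict case
      have key : (lam x - r x) * lam xt < (M * x * |deriv lam x|) * lam xt := by
        nlinarith [mul_le_mul_of_nonneg_left hmpe (le_trans zero_le_one hM1)]
      exact lt_of_mul_lt_mul_right key (le_of_lt hlxt)
    · -- lam x = lam xt : lam constant on [xt, x], contradicts deriv lam xt < 0
      exfalso
      have hconst : ∀ y ∈ Set.Icc xt x, lam y = lam xt := by
        intro y hy
        have hy' : y ∈ Set.Ioc 0 xs := ⟨lt_of_lt_of_le hxt.1 hy.1, le_trans hy.2 hle⟩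
        have h1 : lam y ≤ lam xt := hanti hxt hy' hy.1
        have h2 : lam x ≤ lam y := hanti hy' hx hy.2
        linarith [heqlam ▸ h2]
      have := const_on_Icc_deriv_eq_zero lam xt x xt hlt
        ⟨le_refl xt, le_of_lt hlt⟩ (hdiff xt hxt) hconst
      linarith
  · intro x hx0 hlt
    have hx : x ∈ Set.Ioc 0 xs := ⟨hx0, le_trans (le_of_lt hlt) hxt.2⟩
    have hlx := hpos x hx
    have hrx := hrpos x hx
    have hlle : lam xt ≤ lam x := hanti hx hxt (le_of_lt hlt)
    have hrle : r x ≤ r xt := hrmono hx hxt (le_of_lt hlt)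
    have hmpe := hMPE hx hxt (le_of_lt hlt)
    simp only at hmpe
    rw [div_le_div_iff₀ hlx hlxt] at hmpe
    rcases lt_or_eq_of_le hlle with hstrict | heqlam
    · have key : (M * x * |deriv lam x|) * lam xt < (lam x - r x) * lam xt := by
        nlinarith [mul_le_mul_of_nonneg_left hmpe (le_trans zero_le_one hM1)]
      exact lt_of_mul_lt_mul_right key (le_of_lt hlxt)
    · exfalso
      have hconst : ∀ y ∈ Set.Icc x xt, lam y = lam xt := by
        intro y hy
        have hy' : y ∈ Set.Ioc 0 xs := ⟨lt_of_lt_of_le hx0 hy.1, le_trans hy.2 hxt.2⟩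
        have h1 : lam xt ≤ lam y := hanti hy' hxt hy.2
        have h2 : lam y ≤ lam x := hanti hx hy' hy.1
        linarith [heqlam ▸ h2]
      have := const_on_Icc_deriv_eq_zero lam x xt xt hlt
        ⟨le_of_lt hlt, le_refl xt⟩ (hdiff xt hxt) hconst
      linarith
end

section
/- Let λ(x) = x^{−1/r} with r > 1 on (0,∞), and let M be an integer with 1 ≤ M < r. Suppose prices on a path of M saturated-capacity sellers are each p_e* ≥ (1/M)·λ(x*), and consider the deviation profit π(x) = (p_e* + λ(x) − λ(x*))·x for x ≤ x*. Then π'(x) > 0 for all 0 < x ≤ x*, hence π(x) ≤ π(x*) for all x ∈ (0, x*]. -/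
section aux

variable (r : ℝ)

lemma cap_hasDerivAt (hr : 1 < r) (pe L : ℝ) {x : ℝ} (hx : 0 < x)
    (lam : ℝ → ℝ) (hlam : ∀ x : ℝ, 0 < x → lam x = x ^ (-(1 / r))) :
    HasDerivAt (fun y => (pe + lam y - L) * y)
      (pe - L + (1 - 1 / r) * x ^ (-(1 / r))) x := by
  have hrp : (0:ℝ) < r := lt_trans one_pos hr
  have hg : HasDerivAt (fun y : ℝ => (pe + y ^ (-(1 / r)) - L) * y)
      (pe - L + (1 - 1 / r) * x ^ (-(1 / r))) x := by
    have hpow : HasDerivAt (fun y : ℝ => y ^ (-(1 / r)))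
        ((-(1 / r)) * x ^ (-(1 / r) - 1)) x :=
      Real.hasDerivAt_rpow_const (Or.inl hx.ne')
    have h1 : HasDerivAt (fun y : ℝ => pe + y ^ (-(1 / r)) - L)
        (0 + (-(1 / r)) * x ^ (-(1 / r) - 1) - 0) x :=
      ((hasDerivAt_const x pe).add hpow).sub (hasDerivAt_const x L)
    have h2 := h1.mul (hasDerivAt_id x)
    convert h2 using 1
    any_goals rfl
    have hx1 : x ^ (-(1 / r) - 1) * x = x ^ (-(1 / r)) := by
      nth_rewrite 2 [← Real.rpow_one x]
      rw [← Real.rpow_add hx]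
      norm_num
    have : (0 + -(1 / r) * x ^ (-(1 / r) - 1) - 0) * x
        = -(1 / r) * (x ^ (-(1 / r) - 1) * x) := by ring
    rw [id_eq, this, hx1]
    ring
  refine hg.congr_of_eventuallyEq ?_
  filter_upwards [isOpen_Ioi.eventually_mem (Set.mem_Ioi.mpr hx)] with y hy
  rw [hlam y hy]

end aux

/-- Capacitated elastic demand `lam x = x^(−1/r)` with `r > 1` and `M < r`: a saturated
monopoly charging `p* ≥ lam x*/M` cannot profit by raising its price; the deviation
profit `π(x) = (p* + lam x − lam x*)·x` has `π' > 0` on `(0,x*]`, so `π(x) ≤ π(x*)`. -/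
theorem capacitated_no_price_increase
    (r : ℝ) (hr : 1 < r) (M : ℕ) (hM : 1 ≤ M) (hMr : (M : ℝ) < r)
    (xs pe : ℝ) (hxs : 0 < xs)
    (lam : ℝ → ℝ) (hlam : ∀ x : ℝ, 0 < x → lam x = x ^ (-(1 / r)))
    (hpe : (1 / (M : ℝ)) * lam xs ≤ pe) :
    (∀ x : ℝ, 0 < x → x ≤ xs →
      0 < deriv (fun y => (pe + lam y - lam xs) * y) x) ∧
    (∀ x : ℝ, 0 < x → x ≤ xs →
      (pe + lam x - lam xs) * x ≤ (pe + lam xs - lam xs) * xs) := by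
  have hrp : (0:ℝ) < r := lt_trans one_pos hr
  have hMp : (0:ℝ) < (M:ℝ) := by exact_mod_cast hM
  have hLpos : 0 < lam xs := by
    rw [hlam xs hxs]; positivity
  have key : ∀ x : ℝ, 0 < x → x ≤ xs →
      0 < pe - lam xs + (1 - 1 / r) * x ^ (-(1 / r)) := by
    intro x hx hxle
    have hxp : xs ^ (-(1 / r)) ≤ x ^ (-(1 / r)) :=
      Real.rpow_le_rpow_of_nonpos hx hxle (by
        have : 0 < 1 / r := by positivity
        linarith)
    rw [hlam xs hxs] at hpe hLpos ⊢
    have h1r : 1 - 1 / r > 0 := by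
      have : 1 / r < 1 := by rw [div_lt_one hrp]; exact hr
      linarith
    have hkey : 1 / (M:ℝ) - 1 / r > 0 := by
      have : 1 / r < 1 / (M:ℝ) := one_div_lt_one_div_of_lt hMp hMr
      linarith
    nlinarith [mul_le_mul_of_nonneg_left hxp (le_of_lt h1r),
      mul_pos hkey hLpos]
  constructor
  · intro x hx hxle
    rw [(cap_hasDerivAt r hr pe (lam xs) hx lam hlam).deriv]
    exact key x hx hxle
  · intro x hx hxle
    rcases eq_or_lt_of_le hxle with h | h
    · rw [h]
    have hmono : StrictMonoOn (fun y => (pe + lam y - lam xs) * y) (Set.Icc x xs) := by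
      apply strictMonoOn_of_deriv_pos (convex_Icc x xs)
      · intro y hy
        exact ((cap_hasDerivAt r hr pe (lam xs) (lt_of_lt_of_le hx hy.1) lam
          hlam).differentiableAt).continuousAt.continuousWithinAt
      · intro y hy
        rw [interior_Icc] at hy
        rw [(cap_hasDerivAt r hr pe (lam xs) (lt_trans hx hy.1) lam hlam).deriv]
        exact key y (lt_trans hx hy.1) (le_of_lt hy.2)
    exact le_of_lt (hmono (Set.left_mem_Icc.mpr hxle) (Set.right_mem_Icc.mpr hxle) h)
end
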